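/- Let k ≥ 2 and let A ∈ M_{2^k}(ℂ) be a diagonal matrix, and set B = W_{k−1} A W_{k−1}^*. Then for every h ≥ 1, the diagonal entries of B satisfy: B_{ii} = A_{ii} whenever i = 4h or i = 4h − 3, and B_{ii} = (1/2)(A_{4h−1,4h−1} + A_{4h−2,4h−2}) whenever i = 4h − 1 or i = 4h − 2 (indices ranging over 1,…,2^k). -/

import Mathlib

open Matrix
open scoped Kronecker

noncomputable section

/-- Cast a square matrix along an equality of sizes. -/
def mcast {m n : ℕ} (h : m = n) (A : Matrix (Fin m) (Fin m) ℂ) :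
    Matrix (Fin n) (Fin n) ℂ :=
  Matrix.reindex (finCongr h) (finCongr h) A

/-- `A ⊗ I₂` in the paper's convention, i.e. the block-diagonal matrix `diag(A, A)`
(used for the recursion `W_{n+1} = Wₙ ⊗ I₂ = diag(Wₙ, Wₙ)`). -/
def blockDup {m : ℕ} (A : Matrix (Fin m) (Fin m) ℂ) :
    Matrix (Fin (2 * m)) (Fin (2 * m)) ℂ :=
  Matrix.reindex finProdFinEquiv finProdFinEquiv
    ((1 : Matrix (Fin 2) (Fin 2) ℂ) ⊗ₖ A)

/-- `I₂ ⊗ A` in the paper's convention: each entry `a_{ij}` is placed at the (1-based)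
positions `(2i−1, 2j−1)` and `(2i, 2j)`.  This is the coherent embedding
`φ(A) = I₂ ⊗ A` of the paper, for which `e_{ij} ↦ e_{2i−1,2j−1} + e_{2i,2j}`. -/
def entryDup {m : ℕ} (A : Matrix (Fin m) (Fin m) ℂ) :
    Matrix (Fin (m * 2)) (Fin (m * 2)) ℂ :=
  Matrix.reindex finProdFinEquiv finProdFinEquiv
    (A ⊗ₖ (1 : Matrix (Fin 2) (Fin 2) ℂ))

/-- The 4 × 4 matrix `W₁`. -/
def W1 : Matrix (Fin 4) (Fin 4) ℂ :=
  !![1, 0, 0, 0;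
     0, (Real.sqrt 2 : ℂ)⁻¹, -(Real.sqrt 2 : ℂ)⁻¹, 0;
     0, (Real.sqrt 2 : ℂ)⁻¹, (Real.sqrt 2 : ℂ)⁻¹, 0;
     0, 0, 0, 1]

/-- The sequence `Wₙ ∈ M_{2^{n+1}}(ℂ)`, with `W_{n+1} = Wₙ ⊗ I₂ = diag(Wₙ, Wₙ)`.
(The value at `0` is irrelevant; all statements only involve `n ≥ 1`.) -/
def Wmat : (n : ℕ) → Matrix (Fin (2 ^ (n + 1))) (Fin (2 ^ (n + 1))) ℂ
  | 0 => 1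
  | 1 => mcast (by norm_num) W1
  | (n + 2) => mcast (by ring) (blockDup (Wmat (n + 1)))

/-- `iterA k A n` is the matrix `A(n+1) ∈ M_{2^{k+n}}(ℂ)` of the paper:
`A(1) = A`, `A(n+1) = W_{k+n-1} (I₂ ⊗ A(n)) W_{k+n-1}^*`. -/
def iterA (k : ℕ) (A : Matrix (Fin (2 ^ k)) (Fin (2 ^ k)) ℂ) :
    (n : ℕ) → Matrix (Fin (2 ^ (k + n))) (Fin (2 ^ (k + n))) ℂ
  | 0 => A
  | (n + 1) => Wmat (k + n) * mcast (by ring) (entryDup (iterA k A n)) * (Wmat (k + n))ᴴ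

/-- Squared Frobenius (Hilbert–Schmidt) norm. -/
def frobSq {m n : ℕ} (A : Matrix (Fin m) (Fin n) ℂ) : ℝ :=
  ∑ i, ∑ j, ‖A i j‖ ^ 2

/-- `diffA k A n = A(n+2) - I₂ ⊗ A(n+1)` in the paper's numbering. -/
def diffA (k : ℕ) (A : Matrix (Fin (2 ^ k)) (Fin (2 ^ k)) ℂ) (n : ℕ) :
    Matrix (Fin (2 ^ (k + n + 1))) (Fin (2 ^ (k + n + 1))) ℂ :=
  iterA k A (n + 1) - mcast (by ring) (entryDup (iterA k A n))

/-- The diagonal compression `E_{D(m)}`. -/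
def diagComp {m : ℕ} (A : Matrix (Fin m) (Fin m) ℂ) : Matrix (Fin m) (Fin m) ℂ :=
  Matrix.diagonal (fun i => A i i)


/-! ### Auxiliary lemmas -/

lemma mcast_apply {m n : ℕ} (h : m = n) (A : Matrix (Fin m) (Fin m) ℂ)
    (i j : Fin n) : mcast h A i j = A ⟨i, h ▸ i.2⟩ ⟨j, h ▸ j.2⟩ := by
  subst h; rfl

lemma blockDup_apply {m : ℕ} (hm : 0 < m) (A : Matrix (Fin m) (Fin m) ℂ)
    (i j : Fin (2 * m)) :
    blockDup A i j =
      if (i : ℕ) / m = (j : ℕ) / m then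
        A ⟨(i : ℕ) % m, Nat.mod_lt _ hm⟩ ⟨(j : ℕ) % m, Nat.mod_lt _ hm⟩ else 0 := by
  simp only [blockDup, reindex_apply, submatrix_apply, finProdFinEquiv_symm_apply,
    kroneckerMap_apply, Matrix.one_apply]
  rcases eq_or_ne ((i : ℕ) / m) ((j : ℕ) / m) with h | h
  · rw [if_pos h, if_pos (by ext; exact h), one_mul]
    rfl
  · rw [if_neg h, if_neg (fun hc => h (congrArg Fin.val hc)), zero_mul]

lemma Wmat_apply : ∀ n, 1 ≤ n → ∀ i j : Fin (2 ^ (n + 1)),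
    Wmat n i j = if (i : ℕ) / 4 = (j : ℕ) / 4 then
      W1 ⟨(i : ℕ) % 4, by omega⟩ ⟨(j : ℕ) % 4, by omega⟩ else 0
  | 1, _, i, j => by
    have hi : (i : ℕ) < 4 := by have := i.2; norm_num at this; omega
    have hj : (j : ℕ) < 4 := by have := j.2; norm_num at this; omega
    rw [Wmat, mcast_apply]
    rw [if_pos (by omega)]
    have e1 : (⟨(i : ℕ) % 4, by omega⟩ : Fin 4) = ⟨(i : ℕ), hi⟩ :=
      Fin.ext (Nat.mod_eq_of_lt hi)
    have e2 : (⟨(j : ℕ) % 4, by omega⟩ : Fin 4) = ⟨(j : ℕ), hj⟩ :=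
      Fin.ext (Nat.mod_eq_of_lt hj)
    rw [e1, e2]
  | (n + 2), _, i, j => by
    have hm : 0 < 2 ^ (n + 2) := pow_pos (by norm_num) _
    rw [Wmat, mcast_apply, blockDup_apply hm, Wmat_apply (n+1) (by omega)]
    set m := 2 ^ (n + 2) with hmdef
    have h4 : m = 4 * (m / 4) := by
      have : (4 : ℕ) ∣ m := by
        rw [hmdef, show (4 : ℕ) = 2 ^ 2 by norm_num]
        exact pow_dvd_pow 2 (by omega)
      omega
    set q := m / 4 with hq
    have hq0 : 0 < q := by omega
    have e1 : ∀ a : ℕ, a / m = a / 4 / q := fun a => by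
      rw [h4]; exact (Nat.div_div_eq_div_mul _ _ _).symm
    have e2 : ∀ a : ℕ, a % m % 4 = a % 4 := fun a =>
      Nat.mod_mod_of_dvd _ (by omega)
    have e3 : ∀ a : ℕ, a % m / 4 = a / 4 % q := fun a => by
      rw [h4]; exact Nat.mod_mul_right_div_self a 4 q
    by_cases hdm : (i : ℕ) / m = (j : ℕ) / m
    · rw [if_pos hdm]
      by_cases hd4 : (i : ℕ) % m / 4 = (j : ℕ) % m / 4
      · rw [if_pos hd4, if_pos]
        · congr 2 <;> simp [e2] <;> exact e2 _
        · rw [e1, e1] at hdm; rw [e3, e3] at hd4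
          conv_lhs => rw [← Nat.div_add_mod ((i : ℕ) / 4) q]
          conv_rhs => rw [← Nat.div_add_mod ((j : ℕ) / 4) q]
          rw [hdm, hd4]
      · rw [if_neg hd4, if_neg]
        intro hc
        exact hd4 (by rw [e3, e3, hc])
    · rw [if_neg hdm, if_neg]
      intro hc
      exact hdm (by rw [e1, e1, hc])

lemma W1_zero (a b : ℕ) (pa : a < 4) (pb : b < 4)
    (h : ¬ ((a = 0 ∧ b = 0) ∨ (a = 3 ∧ b = 3) ∨
      ((a = 1 ∨ a = 2) ∧ (b = 1 ∨ b = 2)))) :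
    W1 ⟨a, pa⟩ ⟨b, pb⟩ = 0 := by
  interval_cases a <;> interval_cases b <;> simp_all [W1, Matrix.vecHead, Matrix.vecTail]

lemma W1_33 : W1 3 3 = 1 := by simp [W1]
lemma W1_00 : W1 0 0 = 1 := by simp [W1]
lemma W1_11 : W1 1 1 = (Real.sqrt 2 : ℂ)⁻¹ := by simp [W1]
lemma W1_12 : W1 1 2 = -(Real.sqrt 2 : ℂ)⁻¹ := by simp [W1]
lemma W1_21 : W1 2 1 = (Real.sqrt 2 : ℂ)⁻¹ := by simp [W1]
lemma W1_22 : W1 2 2 = (Real.sqrt 2 : ℂ)⁻¹ := by simp [W1]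

lemma c_mul_star : ((Real.sqrt 2 : ℝ) : ℂ)⁻¹ * star ((Real.sqrt 2 : ℝ) : ℂ)⁻¹ = 1/2 := by
  rw [star_inv₀, RCLike.star_def, Complex.conj_ofReal, ← mul_inv, ← Complex.ofReal_mul,
    Real.mul_self_sqrt (by norm_num)]
  norm_num

/-- Let `k ≥ 2`, let `A ∈ M_{2^k}(ℂ)` be diagonal, and set `B = W_{k−1} A W_{k−1}^*`.
For every `h ≥ 1` (with the 1-based indices `4h−3, …, 4h` in range `1, …, 2^k`,
equivalently `4h ≤ 2^k`): `B_{ii} = A_{ii}` for `i = 4h` and `i = 4h−3`, and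
`B_{ii} = (A_{4h−1,4h−1} + A_{4h−2,4h−2})/2` for `i = 4h−1` and `i = 4h−2`.
(0-based, the 1-based index `i` corresponds to `i − 1`.) -/
theorem stmt_8 (k : ℕ) (hk : 2 ≤ k) (A : Matrix (Fin (2 ^ k)) (Fin (2 ^ k)) ℂ)
    (hA : A.IsDiag)
    (B : Matrix (Fin (2 ^ k)) (Fin (2 ^ k)) ℂ)
    (hB : B =
      mcast (show 2 ^ (k - 1 + 1) = 2 ^ k by
          have e : k - 1 + 1 = k := by omega
          rw [e]) (Wmat (k - 1)) * A *
        (mcast (show 2 ^ (k - 1 + 1) = 2 ^ k by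
          have e : k - 1 + 1 = k := by omega
          rw [e]) (Wmat (k - 1)))ᴴ)
    (h : ℕ) (hh : 1 ≤ h) (hrange : 4 * h ≤ 2 ^ k) :
    B ⟨4 * h - 1, by omega⟩ ⟨4 * h - 1, by omega⟩ = A ⟨4 * h - 1, by omega⟩ ⟨4 * h - 1, by omega⟩ ∧
    B ⟨4 * h - 4, by omega⟩ ⟨4 * h - 4, by omega⟩ = A ⟨4 * h - 4, by omega⟩ ⟨4 * h - 4, by omega⟩ ∧
    B ⟨4 * h - 2, by omega⟩ ⟨4 * h - 2, by omega⟩ =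
      (1 / 2 : ℂ) * (A ⟨4 * h - 2, by omega⟩ ⟨4 * h - 2, by omega⟩ +
        A ⟨4 * h - 3, by omega⟩ ⟨4 * h - 3, by omega⟩) ∧
    B ⟨4 * h - 3, by omega⟩ ⟨4 * h - 3, by omega⟩ =
      (1 / 2 : ℂ) * (A ⟨4 * h - 2, by omega⟩ ⟨4 * h - 2, by omega⟩ +
        A ⟨4 * h - 3, by omega⟩ ⟨4 * h - 3, by omega⟩) := by
  have hk1 : 1 ≤ k - 1 := by omega
  have hN4 : 4 ≤ 2 ^ k := by
    calc (4:ℕ) = 4 * 1 := by norm_num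
    _ ≤ 4 * h := by omega
    _ ≤ 2 ^ k := hrange
  have hA' : Matrix.diagonal (fun i => A i i) = A := hA.diagonal_diag
  have hBdiag : ∀ i : Fin (2^k), B i i =
      ∑ x : Fin (2^k),
        (if (i:ℕ)/4 = (x:ℕ)/4 then W1 ⟨(i:ℕ)%4, by omega⟩ ⟨(x:ℕ)%4, by omega⟩ else 0)
          * A x x *
        star (if (i:ℕ)/4 = (x:ℕ)/4 then W1 ⟨(i:ℕ)%4, by omega⟩ ⟨(x:ℕ)%4, by omega⟩ else 0) := by
    intro i
    rw [hB, ← hA', Matrix.mul_apply]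
    refine Finset.sum_congr rfl fun x _ => ?_
    rw [Matrix.mul_diagonal, Matrix.conjTranspose_apply, mcast_apply, Wmat_apply _ hk1]
    simp
  -- generic vanishing of off terms
  have hz : ∀ i x : Fin (2^k), (¬ ((i:ℕ)/4 = (x:ℕ)/4) ∨
      W1 ⟨(i:ℕ)%4, by omega⟩ ⟨(x:ℕ)%4, by omega⟩ = 0) →
      (if (i:ℕ)/4 = (x:ℕ)/4 then W1 ⟨(i:ℕ)%4, by omega⟩ ⟨(x:ℕ)%4, by omega⟩ else 0)
          * A x x *
        star (if (i:ℕ)/4 = (x:ℕ)/4 then W1 ⟨(i:ℕ)%4, by omega⟩ ⟨(x:ℕ)%4, by omega⟩ else 0)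
        = 0 := by
    intro i x hx
    have : (if (i:ℕ)/4 = (x:ℕ)/4 then
        W1 ⟨(i:ℕ)%4, by omega⟩ ⟨(x:ℕ)%4, by omega⟩ else 0) = 0 := by
      rcases hx with hx | hx
      · rw [if_neg hx]
      · split_ifs <;> [exact hx; rfl]
    rw [this]
    simp
  refine ⟨?_, ?_, ?_, ?_⟩
  · -- i = 4h-1
    set i0 : Fin (2^k) := ⟨4*h - 1, by omega⟩ with hi0
    have hival : (i0 : ℕ) = 4*h - 1 := rfl
    rw [hBdiag]
    rw [Finset.sum_eq_single i0]
    · rw [if_pos rfl]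
      have e3 : (⟨(i0:ℕ)%4, by omega⟩ : Fin 4) = 3 := Fin.ext (by
        show (i0:ℕ)%4 = 3; rw [hival]; omega)
      rw [e3, W1_33]
      simp
    · intro x _ hx
      apply hz
      by_cases hd : (i0:ℕ)/4 = (x:ℕ)/4
      · right
        apply W1_zero
        have hxne : (x:ℕ) ≠ (i0:ℕ) := fun hc => hx (Fin.ext hc)
        rw [hival] at hd ⊢
        rw [hival] at hxne
        omega
      · exact Or.inl hd
    · intro hmem; exact absurd (Finset.mem_univ i0) hmem
  · -- i = 4h-4
    set i0 : Fin (2^k) := ⟨4*h - 4, by omega⟩ with hi0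
    have hival : (i0 : ℕ) = 4*h - 4 := rfl
    rw [hBdiag]
    rw [Finset.sum_eq_single i0]
    · rw [if_pos rfl]
      have e3 : (⟨(i0:ℕ)%4, by omega⟩ : Fin 4) = 0 := Fin.ext (by
        show (i0:ℕ)%4 = 0; rw [hival]; omega)
      rw [e3, W1_00]
      simp
    · intro x _ hx
      apply hz
      by_cases hd : (i0:ℕ)/4 = (x:ℕ)/4
      · right
        apply W1_zero
        have hxne : (x:ℕ) ≠ (i0:ℕ) := fun hc => hx (Fin.ext hc)
        rw [hival] at hd ⊢
        rw [hival] at hxne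
        omega
      · exact Or.inl hd
    · intro hmem; exact absurd (Finset.mem_univ i0) hmem
  · -- i = 4h-2, row residue 2
    set i0 : Fin (2^k) := ⟨4*h - 2, by omega⟩ with hi0
    set i1 : Fin (2^k) := ⟨4*h - 3, by omega⟩ with hi1
    have hival : (i0 : ℕ) = 4*h - 2 := rfl
    have hival1 : (i1 : ℕ) = 4*h - 3 := rfl
    rw [hBdiag]
    rw [show (Finset.univ : Finset (Fin (2^k))) = Finset.univ from rfl]
    rw [← Finset.sum_subset (Finset.subset_univ {i0, i1}) (fun x _ hx => by
      apply hz
      by_cases hd : (i0:ℕ)/4 = (x:ℕ)/4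
      · right
        apply W1_zero
        simp only [Finset.mem_insert, Finset.mem_singleton, not_or] at hx
        have h1 : (x:ℕ) ≠ (i0:ℕ) := fun hc => hx.1 (Fin.ext hc)
        have h2 : (x:ℕ) ≠ (i1:ℕ) := fun hc => hx.2 (Fin.ext hc)
        rw [hival] at hd ⊢
        rw [hival] at h1
        rw [hival1] at h2
        omega
      · exact Or.inl hd)]
    rw [Finset.sum_insert (by
      simp only [Finset.mem_singleton]
      intro hc
      have := congrArg Fin.val hc
      rw [hival, hival1] at this
      omega), Finset.sum_singleton]
    have hd0 : (i0:ℕ)/4 = (i0:ℕ)/4 := rfl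
    have hd1 : (i0:ℕ)/4 = (i1:ℕ)/4 := by rw [hival, hival1]; omega
    rw [if_pos hd0, if_pos hd1]
    have er : (⟨(i0:ℕ)%4, by omega⟩ : Fin 4) = 2 := Fin.ext (by
      show (i0:ℕ)%4 = 2; rw [hival]; omega)
    have ec1 : (⟨(i1:ℕ)%4, by omega⟩ : Fin 4) = 1 := Fin.ext (by
      show (i1:ℕ)%4 = 1; rw [hival1]; omega)
    rw [er, ec1, W1_22, W1_21]
    rw [mul_comm (((Real.sqrt 2 : ℝ) : ℂ)⁻¹) (A i0 i0),
        mul_comm (((Real.sqrt 2 : ℝ) : ℂ)⁻¹) (A i1 i1),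
        mul_assoc, mul_assoc, c_mul_star]
    ring
  · -- i = 4h-3, row residue 1
    set i0 : Fin (2^k) := ⟨4*h - 3, by omega⟩ with hi0
    set i1 : Fin (2^k) := ⟨4*h - 2, by omega⟩ with hi1
    have hival : (i0 : ℕ) = 4*h - 3 := rfl
    have hival1 : (i1 : ℕ) = 4*h - 2 := rfl
    rw [hBdiag]
    rw [← Finset.sum_subset (Finset.subset_univ {i0, i1}) (fun x _ hx => by
      apply hz
      by_cases hd : (i0:ℕ)/4 = (x:ℕ)/4
      · right
        apply W1_zero
        simp only [Finset.mem_insert, Finset.mem_singleton, not_or] at hx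
        have h1 : (x:ℕ) ≠ (i0:ℕ) := fun hc => hx.1 (Fin.ext hc)
        have h2 : (x:ℕ) ≠ (i1:ℕ) := fun hc => hx.2 (Fin.ext hc)
        rw [hival] at hd ⊢
        rw [hival] at h1
        rw [hival1] at h2
        omega
      · exact Or.inl hd)]
    rw [Finset.sum_insert (by
      simp only [Finset.mem_singleton]
      intro hc
      have := congrArg Fin.val hc
      rw [hival, hival1] at this
      omega), Finset.sum_singleton]
    have hd0 : (i0:ℕ)/4 = (i0:ℕ)/4 := rfl
    have hd1 : (i0:ℕ)/4 = (i1:ℕ)/4 := by rw [hival, hival1]; omega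
    rw [if_pos hd0, if_pos hd1]
    have er : (⟨(i0:ℕ)%4, by omega⟩ : Fin 4) = 1 := Fin.ext (by
      show (i0:ℕ)%4 = 1; rw [hival]; omega)
    have ec1 : (⟨(i1:ℕ)%4, by omega⟩ : Fin 4) = 2 := Fin.ext (by
      show (i1:ℕ)%4 = 2; rw [hival1]; omega)
    rw [er, ec1, W1_11, W1_12]
    have hneg : -((Real.sqrt 2 : ℝ) : ℂ)⁻¹ * A i1 i1 * star (-((Real.sqrt 2 : ℝ) : ℂ)⁻¹)
        = (1/2 : ℂ) * A i1 i1 := by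
      rw [star_neg]
      have : -((Real.sqrt 2 : ℝ) : ℂ)⁻¹ * A i1 i1 * -star (((Real.sqrt 2 : ℝ) : ℂ)⁻¹)
          = (((Real.sqrt 2 : ℝ) : ℂ)⁻¹ * star (((Real.sqrt 2 : ℝ) : ℂ)⁻¹)) * A i1 i1 := by
        ring
      rw [this, c_mul_star]
    rw [hneg]
    rw [mul_comm (((Real.sqrt 2 : ℝ) : ℂ)⁻¹) (A i0 i0), mul_assoc, c_mul_star]
    ring
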